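/- Let n be a positive integer not divisible by 3. If Π₁ and Π₂ are (3,n)-Dyck paths with area(Π₁) = area(Π₂), skips(Π₁) = skips(Π₂), and dinv(Π₁) = dinv(Π₂), then Π₁ = Π₂. -/

import Mathlib

open MvPolynomial

/-- An `(m,n)`-Dyck path: a north/east lattice path from `(0,0)` to `(m,n)` staying
weakly above the diagonal `y = (n/m)x`.  Such a path is encoded by recording, for each
of the `m` columns (indexed `0,…,m-1` from left to right), the number of cells of that
column lying above the path; this gives an antitone sequence, and the diagonal
condition for the east step in column `i` reads `m * c i ≤ n * (m - 1 - i)`. -/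
def DyckPath (m n : ℕ) : Type :=
  {c : Fin m → Fin (n + 1) //
    (∀ i j : Fin m, i ≤ j → (c j : ℕ) ≤ (c i : ℕ)) ∧
      ∀ i : Fin m, m * (c i : ℕ) ≤ n * (m - 1 - (i : ℕ))}

noncomputable instance instFintypeDyckPath (m n : ℕ) : Fintype (DyckPath m n) := by
  classical
  unfold DyckPath
  infer_instance

namespace DyckPath

variable {m n : ℕ}

/-- `λ(Π)`, the set of cells of the `m × n` lattice lying above the path `Π`.
The cell `(i, j)` (with `i : Fin m`, `j : Fin n`) is the cell in column `i + 1`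
(from the left) and row `j + 1` (from the bottom) in the paper's 1-based indexing. -/
def cellsAbove (P : DyckPath m n) : Set (Fin m × Fin n) :=
  {x | n - (P.1 x.1 : ℕ) ≤ (x.2 : ℕ)}

/-- `arm(x)`: the number of cells of `λ(Π)` strictly east of `x` (in the row of `x`). -/
noncomputable def arm (P : DyckPath m n) (x : Fin m × Fin n) : ℕ :=
  {y ∈ P.cellsAbove | x.1 < y.1 ∧ y.2 = x.2}.ncard

/-- `leg(x)`: the number of cells of `λ(Π)` strictly south of `x` (in the column of `x`). -/
noncomputable def leg (P : DyckPath m n) (x : Fin m × Fin n) : ℕ :=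
  {y ∈ P.cellsAbove | y.1 = x.1 ∧ y.2 < x.2}.ncard

end DyckPath

/-- The dinv condition `arm/(leg+1) < m/n < (arm+1)/leg` for a cell with given arm `a`
and leg `l`, the right inequality being interpreted as true when `l = 0`. -/
def dinvCond (m n a l : ℕ) : Prop :=
  (a : ℚ) / ((l : ℚ) + 1) < (m : ℚ) / (n : ℚ) ∧
    (l = 0 ∨ (m : ℚ) / (n : ℚ) < ((a : ℚ) + 1) / (l : ℚ))

namespace DyckPath

variable {m n : ℕ}

/-- `dinv(Π)`: the number of cells `x ∈ λ(Π)` with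
`arm(x)/(leg(x)+1) < m/n < (arm(x)+1)/leg(x)`. -/
noncomputable def dinv (P : DyckPath m n) : ℕ :=
  {x ∈ P.cellsAbove | dinvCond m n (P.arm x) (P.leg x)}.ncard

/-- `area(Π)`: the number of cells of the lattice lying entirely between the path and
the diagonal, i.e. cells lying entirely weakly above the diagonal `y = (n/m)x` and
below the path. -/
noncomputable def area (P : DyckPath m n) : ℕ :=
  {x : Fin m × Fin n | n * ((x.1 : ℕ) + 1) ≤ m * (x.2 : ℕ) ∧ x ∉ P.cellsAbove}.ncard

end DyckPath

/-- The `(m,n)`-rational `q,t`-Catalan polynomial `C_{m,n}(q,t)`, with `q = X 0` and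
`t = X 1`:  `C_{m,n}(q,t) = Σ_Π q^{dinv(Π)} t^{area(Π)}` over all `(m,n)`-Dyck paths. -/
noncomputable def ratCatalan (m n : ℕ) : MvPolynomial (Fin 2) ℤ :=
  ∑ P : DyckPath m n, X 0 ^ P.dinv * X 1 ^ P.area

/-- The rank of the cell `(i, j)` of the `3 × n` lattice: in the paper's 1-based
coordinates `(a, b) = (i+1, j+1)`, this is `R(a,b) = -a·n + 3(b-1)`. -/
def cellRank (n : ℕ) (x : Fin 3 × Fin n) : ℤ :=
  3 * (x.2 : ℤ) - ((x.1 : ℤ) + 1) * (n : ℤ)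

/-- The set of positive ranks of the `3 × n` lattice: these, in increasing order, are
the entries of the rank word. -/
def posRank (n : ℕ) : Set ℤ :=
  {r | 0 < r ∧ ∃ x : Fin 3 × Fin n, cellRank n x = r}

/-- The set of marked ranks of a `(3,n)`-Dyck path: the ranks of the cells above
the path. -/
def markedRank {n : ℕ} (P : DyckPath 3 n) : Set ℤ :=
  cellRank n '' P.cellsAbove

/-- `skips(Π)`: the number of skips of `Π`, i.e. of maximal blocks of consecutive
unmarked entries of the rank word of `Π` having at least one marked entry to the left
and at least one marked entry to the right.  Each such block is counted through its
rightmost entry `r`: `r` is an unmarked entry, some marked entry lies to its left, and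
the next entry of the rank word after `r` is marked. -/
noncomputable def DyckPath.skips {n : ℕ} (P : DyckPath 3 n) : ℕ :=
  {r : ℤ | r ∈ posRank n ∧ r ∉ markedRank P ∧
    (∃ l ∈ markedRank P, l < r) ∧
    ∃ s ∈ markedRank P, r < s ∧ ∀ t ∈ posRank n, r < t → s ≤ t}.ncard

section Aux

open Finset

lemma ncard_colSet {n : ℕ} (i : Fin 3) (p : ℕ → Prop) [DecidablePred p] :
    {x : Fin 3 × Fin n | x.1 = i ∧ p x.2.val}.ncard = ((Finset.range n).filter p).card := by
  have himg : {x : Fin 3 × Fin n | x.1 = i ∧ p x.2.val}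
      = (fun j => (i, j)) '' {j : Fin n | p j.val} := by
    ext ⟨x1, x2⟩
    simp only [Set.mem_setOf_eq, Set.mem_image]
    constructor
    · rintro ⟨rfl, hp⟩; exact ⟨x2, hp, rfl⟩
    · rintro ⟨j, hp, h⟩; cases h; exact ⟨rfl, hp⟩
  rw [himg, Set.ncard_image_of_injective _ (fun j k h => by simpa using h)]
  rw [Set.ncard_eq_toFinset_card', Set.toFinset_setOf]
  rw [Finset.card_filter, Finset.card_filter,
    Fin.sum_univ_eq_sum_range (fun j => if p j then 1 else 0)]

lemma ncard_split {n : ℕ} (S : Set (Fin 3 × Fin n)) (q : Fin 3 → ℕ → Prop)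
    [∀ i, DecidablePred (q i)]
    (hq : ∀ (i : Fin 3) (j : Fin n), (i, j) ∈ S ↔ q i j.val) :
    S.ncard = ((Finset.range n).filter (q 0)).card + ((Finset.range n).filter (q 1)).card
      + ((Finset.range n).filter (q 2)).card := by
  have hS : S = {x : Fin 3 × Fin n | x.1 = 0 ∧ q 0 x.2.val} ∪
      ({x | x.1 = 1 ∧ q 1 x.2.val} ∪ {x | x.1 = 2 ∧ q 2 x.2.val}) := by
    ext ⟨i, j⟩
    have h := hq i j
    fin_cases i <;> simp_all [Set.mem_setOf_eq]
  rw [hS, Set.ncard_union_eq, Set.ncard_union_eq, ncard_colSet, ncard_colSet, ncard_colSet]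
  · ring
  · exact Set.disjoint_left.mpr (by rintro ⟨i,j⟩ ⟨h1,-⟩ ⟨h2,-⟩; simp_all)
  · exact Set.disjoint_left.mpr (by
      rintro ⟨i,j⟩ ⟨h1,-⟩ (⟨h2,-⟩|⟨h2,-⟩) <;> simp_all)

variable {n : ℕ} (P : DyckPath 3 n)

lemma c2_eq : (P.1 2 : ℕ) = 0 := by
  have h := P.2.2 2
  simp at h
  simp [h]

lemma mem_above_iff (x : Fin 3 × Fin n) :
    x ∈ P.cellsAbove ↔ n - (P.1 x.1 : ℕ) ≤ x.2.val := Iff.rfl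

lemma leg_eq (i : Fin 3) (j : Fin n) :
    P.leg (i, j) = j.val - (n - (P.1 i : ℕ)) := by
  unfold DyckPath.leg
  have hset : {y | y ∈ P.cellsAbove ∧ y.1 = (i, j).1 ∧ y.2 < (i, j).2}
      = {x : Fin 3 × Fin n | x.1 = i ∧ (n - (P.1 i : ℕ) ≤ x.2.val ∧ x.2.val < j.val)} := by
    ext ⟨y1, y2⟩
    simp only [Set.mem_setOf_eq, mem_above_iff, Fin.lt_def]
    constructor
    · rintro ⟨hab, rfl, hlt⟩; exact ⟨rfl, hab, hlt⟩
    · rintro ⟨rfl, hab, hlt⟩; exact ⟨hab, rfl, hlt⟩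
  rw [show {y ∈ P.cellsAbove | y.1 = (i, j).1 ∧ y.2 < (i, j).2}
      = {y | y ∈ P.cellsAbove ∧ y.1 = (i, j).1 ∧ y.2 < (i, j).2} from rfl, hset,
    ncard_colSet i (fun k => n - (P.1 i : ℕ) ≤ k ∧ k < j.val)]
  have : (Finset.range n).filter (fun k => n - (P.1 i : ℕ) ≤ k ∧ k < j.val)
      = Finset.Ico (n - (P.1 i : ℕ)) j.val := by
    ext k
    simp only [Finset.mem_filter, Finset.mem_range, Finset.mem_Ico]
    have := j.isLt
    omega
  rw [this, Nat.card_Ico]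

lemma arm_eq (i : Fin 3) (j : Fin n) :
    P.arm (i, j) = if i = 0 ∧ n - (P.1 1 : ℕ) ≤ j.val then 1 else 0 := by
  have hc2 := c2_eq P
  unfold DyckPath.arm
  split_ifs with h
  · obtain ⟨rfl, hb⟩ := h
    have hset : {y ∈ P.cellsAbove | (0, j).1 < y.1 ∧ y.2 = (0, j).2}
        = {((1 : Fin 3), j)} := by
      ext ⟨y1, y2⟩
      simp only [Set.mem_setOf_eq, Set.mem_singleton_iff, Prod.mk.injEq, mem_above_iff,
        Fin.lt_def]
      constructor
      · rintro ⟨hab, hlt, rfl⟩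
        fin_cases y1
        · simp at hlt
        · exact ⟨rfl, rfl⟩
        · exfalso
          have hab' : n - (P.1 2 : ℕ) ≤ (y2 : ℕ) := hab
          rw [hc2] at hab'; have := y2.isLt; omega
      · rintro ⟨rfl, rfl⟩
        exact ⟨hb, by simp, rfl⟩
    rw [hset, Set.ncard_singleton]
  · have hset : {y ∈ P.cellsAbove | (i, j).1 < y.1 ∧ y.2 = (i, j).2} = (∅ : Set _) := by
      ext ⟨y1, y2⟩
      simp only [Set.mem_setOf_eq, Set.mem_empty_iff_false, iff_false, not_and, mem_above_iff,
        Fin.lt_def]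
      intro hab hlt hy2
      fin_cases y1
      · simp at hlt
      · apply h
        refine ⟨Fin.ext ?_, ?_⟩
        · have := i.isLt; simp at hlt ⊢; omega
        · cases hy2; exact hab
      · have hab' : n - (P.1 2 : ℕ) ≤ (y2 : ℕ) := hab
        rw [hc2] at hab'; have := y2.isLt; omega
    rw [hset, Set.ncard_empty]

lemma dinvCond_iff' (hn : 0 < n) (A L : ℕ) :
    dinvCond 3 n A L ↔ (A * n < 3 * (L + 1) ∧ (L = 0 ∨ 3 * L < (A + 1) * n)) := by
  have hnq : (0 : ℚ) < (n : ℚ) := by exact_mod_cast hn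
  have hL1 : (0 : ℚ) < (L : ℚ) + 1 := by positivity
  unfold dinvCond
  constructor
  · rintro ⟨h1, h2⟩
    refine ⟨?_, ?_⟩
    · rw [div_lt_div_iff₀ hL1 hnq] at h1; exact_mod_cast h1
    · rcases h2 with h | h
      · exact Or.inl h
      · rcases Nat.eq_zero_or_pos L with hL | hL
        · exact Or.inl hL
        · right
          rw [div_lt_div_iff₀ hnq (by exact_mod_cast hL)] at h
          exact_mod_cast h
  · rintro ⟨h1, h2⟩
    refine ⟨?_, ?_⟩
    · rw [div_lt_div_iff₀ hL1 hnq]; exact_mod_cast h1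
    · rcases h2 with h | h
      · exact Or.inl h
      · rcases Nat.eq_zero_or_pos L with hL | hL
        · exact Or.inl hL
        · right
          rw [div_lt_div_iff₀ hnq (by exact_mod_cast hL)]
          exact_mod_cast h

end Aux

open Finset in
lemma area_eq {n : ℕ} (hn : 0 < n) (h3 : n % 3 ≠ 0) (P : DyckPath 3 n) :
    P.area = ((n - (P.1 0 : ℕ)) - (n / 3 + 1)) + ((n - (P.1 1 : ℕ)) - (2 * n / 3 + 1)) := by
  classical
  have hc2 := c2_eq P
  have h20 : 3 * (P.1 0 : ℕ) ≤ n * 2 := by have := P.2.2 0; simpa using this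
  have h21 : 3 * (P.1 1 : ℕ) ≤ n * 1 := by have := P.2.2 1; simpa using this
  unfold DyckPath.area
  rw [ncard_split _ (fun i j => if i = 0 then n ≤ 3 * j ∧ j < n - (P.1 0 : ℕ)
      else if i = 1 then 2 * n ≤ 3 * j ∧ j < n - (P.1 1 : ℕ) else False)
    (by
      intro i j
      fin_cases i <;>
        simp only [Set.mem_setOf_eq, mem_above_iff, Fin.isValue] <;>
        simp [hc2] <;> omega)]
  have f0 : (Finset.range n).filter (fun j => if (0 : Fin 3) = 0 then
        n ≤ 3 * j ∧ j < n - (P.1 0 : ℕ)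
      else if (0 : Fin 3) = 1 then 2 * n ≤ 3 * j ∧ j < n - (P.1 1 : ℕ) else False)
      = Finset.Ico (n / 3 + 1) (n - (P.1 0 : ℕ)) := by
    ext k
    simp only [Finset.mem_filter, Finset.mem_range, Finset.mem_Ico, reduceIte]
    omega
  have f1 : (Finset.range n).filter (fun j => if (1 : Fin 3) = 0 then
        n ≤ 3 * j ∧ j < n - (P.1 0 : ℕ)
      else if (1 : Fin 3) = 1 then 2 * n ≤ 3 * j ∧ j < n - (P.1 1 : ℕ) else False)
      = Finset.Ico (2 * n / 3 + 1) (n - (P.1 1 : ℕ)) := by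
    ext k
    simp only [Finset.mem_filter, Finset.mem_range, Finset.mem_Ico, reduceIte,
      if_neg (by decide : ¬ (1 : Fin 3) = 0)]
    omega
  have f2 : (Finset.range n).filter (fun j => if (2 : Fin 3) = 0 then
        n ≤ 3 * j ∧ j < n - (P.1 0 : ℕ)
      else if (2 : Fin 3) = 1 then 2 * n ≤ 3 * j ∧ j < n - (P.1 1 : ℕ) else False)
      = (∅ : Finset ℕ) := by
    ext k
    simp only [Finset.mem_filter, Finset.mem_range, Finset.notMem_empty, iff_false,
      if_neg (by decide : ¬ (2 : Fin 3) = 0), if_neg (by decide : ¬ (2 : Fin 3) = 1)]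
    simp
  rw [f0, f1, f2, Nat.card_Ico, Nat.card_Ico, Finset.card_empty]
  omega

open Finset in
lemma dinv_eq {n : ℕ} (hn : 0 < n) (h3 : n % 3 ≠ 0) (P : DyckPath 3 n) :
    P.dinv = min ((P.1 0 : ℕ) - (P.1 1 : ℕ)) (n / 3 + 1)
      + ((P.1 0 : ℕ) - max ((P.1 0 : ℕ) - (P.1 1 : ℕ)) (n / 3)) + (P.1 1 : ℕ) := by
  classical
  have hc2 := c2_eq P
  have h20 : 3 * (P.1 0 : ℕ) ≤ n * 2 := by have := P.2.2 0; simpa using this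
  have h21 : 3 * (P.1 1 : ℕ) ≤ n * 1 := by have := P.2.2 1; simpa using this
  have hba : (P.1 1 : ℕ) ≤ (P.1 0 : ℕ) := P.2.1 0 1 (by decide)
  unfold DyckPath.dinv
  rw [ncard_split _ (fun i j => if i = 0 then
        (n - (P.1 0 : ℕ) ≤ j ∧ ((n - (P.1 1 : ℕ) ≤ j ∧ n < 3 * (j - (n - (P.1 0 : ℕ)) + 1))
          ∨ (j < n - (P.1 1 : ℕ) ∧ 3 * (j - (n - (P.1 0 : ℕ))) < n)))
      else if i = 1 then n - (P.1 1 : ℕ) ≤ j else False)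
    (by
      intro i j
      have hj := j.isLt
      fin_cases i
      · simp only [show ((⟨0, by omega⟩ : Fin 3)) = (0 : Fin 3) from rfl]
        simp only [Set.mem_setOf_eq, Set.mem_sep_iff, mem_above_iff, arm_eq, leg_eq,
          dinvCond_iff' hn, reduceIte, eq_self_iff_true, true_and]
        by_cases hbj : n - (P.1 1 : ℕ) ≤ (j : ℕ)
        · simp only [if_pos hbj]; omega
        · simp only [if_neg hbj]; omega
      · simp only [show ((⟨1, by omega⟩ : Fin 3)) = (1 : Fin 3) from rfl]
        simp only [Set.mem_setOf_eq, Set.mem_sep_iff, mem_above_iff, arm_eq, leg_eq,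
          dinvCond_iff' hn, reduceIte, if_neg (by decide : ¬ (1 : Fin 3) = 0),
          eq_false (by decide : ¬ (1 : Fin 3) = 0), false_and, if_false, ite_false]
        omega
      · simp only [show ((⟨2, by omega⟩ : Fin 3)) = (2 : Fin 3) from rfl]
        refine iff_of_false ?_ ?_
        · rintro ⟨h1, -⟩
          have h1' : n - (P.1 2 : ℕ) ≤ (j : ℕ) := h1
          omega
        · simp only [reduceIte, if_neg (by decide : ¬ (2 : Fin 3) = 0),
            if_neg (by decide : ¬ (2 : Fin 3) = 1)]
          exact not_false)]
  have f0 : (Finset.range n).filter (fun j => if (0 : Fin 3) = 0 then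
        (n - (P.1 0 : ℕ) ≤ j ∧ ((n - (P.1 1 : ℕ) ≤ j ∧ n < 3 * (j - (n - (P.1 0 : ℕ)) + 1))
          ∨ (j < n - (P.1 1 : ℕ) ∧ 3 * (j - (n - (P.1 0 : ℕ))) < n)))
      else if (0 : Fin 3) = 1 then n - (P.1 1 : ℕ) ≤ j else False)
      = Finset.Ico (n - (P.1 0 : ℕ))
          (n - (P.1 0 : ℕ) + min ((P.1 0 : ℕ) - (P.1 1 : ℕ)) (n / 3 + 1))
        ∪ Finset.Ico (n - (P.1 0 : ℕ) + max ((P.1 0 : ℕ) - (P.1 1 : ℕ)) (n / 3)) n := by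
    ext k
    simp only [Finset.mem_filter, Finset.mem_range, Finset.mem_union, Finset.mem_Ico,
      reduceIte]
    omega
  have f1 : (Finset.range n).filter (fun j => if (1 : Fin 3) = 0 then
        (n - (P.1 0 : ℕ) ≤ j ∧ ((n - (P.1 1 : ℕ) ≤ j ∧ n < 3 * (j - (n - (P.1 0 : ℕ)) + 1))
          ∨ (j < n - (P.1 1 : ℕ) ∧ 3 * (j - (n - (P.1 0 : ℕ))) < n)))
      else if (1 : Fin 3) = 1 then n - (P.1 1 : ℕ) ≤ j else False)
      = Finset.Ico (n - (P.1 1 : ℕ)) n := by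
    ext k
    simp only [Finset.mem_filter, Finset.mem_range, Finset.mem_Ico, reduceIte,
      if_neg (by decide : ¬ (1 : Fin 3) = 0)]
    omega
  have f2 : (Finset.range n).filter (fun j => if (2 : Fin 3) = 0 then
        (n - (P.1 0 : ℕ) ≤ j ∧ ((n - (P.1 1 : ℕ) ≤ j ∧ n < 3 * (j - (n - (P.1 0 : ℕ)) + 1))
          ∨ (j < n - (P.1 1 : ℕ) ∧ 3 * (j - (n - (P.1 0 : ℕ))) < n)))
      else if (2 : Fin 3) = 1 then n - (P.1 1 : ℕ) ≤ j else False)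
      = (∅ : Finset ℕ) := by
    ext k
    simp only [Finset.mem_filter, Finset.mem_range, Finset.notMem_empty, iff_false,
      if_neg (by decide : ¬ (2 : Fin 3) = 0), if_neg (by decide : ¬ (2 : Fin 3) = 1)]
    simp
  rw [f0, f1, f2, Finset.card_union_of_disjoint (by
      simp only [Finset.disjoint_left, Finset.mem_Ico]
      intro k h1 h2
      omega),
    Nat.card_Ico, Nat.card_Ico, Nat.card_Ico, Finset.card_empty]
  omega

lemma stat_inj (n a1 b1 a2 b2 : ℕ) (h3 : n % 3 ≠ 0)
    (hb1 : b1 ≤ a1) (hb2 : b2 ≤ a2)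
    (h11 : 3 * b1 ≤ n * 1) (h12 : 3 * a1 ≤ n * 2)
    (h21 : 3 * b2 ≤ n * 1) (h22 : 3 * a2 ≤ n * 2)
    (hs : (n - a1) - (n / 3 + 1) + ((n - b1) - (2 * n / 3 + 1))
        = (n - a2) - (n / 3 + 1) + ((n - b2) - (2 * n / 3 + 1)))
    (hd : min (a1 - b1) (n / 3 + 1) + (a1 - max (a1 - b1) (n / 3)) + b1
        = min (a2 - b2) (n / 3 + 1) + (a2 - max (a2 - b2) (n / 3)) + b2) :
    a1 = a2 ∧ b1 = b2 := by
  omega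

/-- Two `(3,n)`-Dyck paths with the same area, skips and dinv
statistics are equal. -/
theorem dyckPath_eq_of_stats_eq (n : ℕ) (hn : 0 < n) (h3 : ¬ (3 ∣ n))
    (P₁ P₂ : DyckPath 3 n) (harea : P₁.area = P₂.area) (hskips : P₁.skips = P₂.skips)
    (hdinv : P₁.dinv = P₂.dinv) :
    P₁ = P₂ := by
  
  have h3' : n % 3 ≠ 0 := fun h => h3 (Nat.dvd_of_mod_eq_zero h)
  have e1 := area_eq hn h3' P₁
  have e2 := area_eq hn h3' P₂
  have d1 := dinv_eq hn h3' P₁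
  have d2 := dinv_eq hn h3' P₂
  have c21 := c2_eq P₁
  have c22 := c2_eq P₂
  have h20₁ : 3 * (P₁.1 0 : ℕ) ≤ n * 2 := by have := P₁.2.2 0; simpa using this
  have h21₁ : 3 * (P₁.1 1 : ℕ) ≤ n * 1 := by have := P₁.2.2 1; simpa using this
  have h20₂ : 3 * (P₂.1 0 : ℕ) ≤ n * 2 := by have := P₂.2.2 0; simpa using this
  have h21₂ : 3 * (P₂.1 1 : ℕ) ≤ n * 1 := by have := P₂.2.2 1; simpa using this
  have hba₁ : (P₁.1 1 : ℕ) ≤ (P₁.1 0 : ℕ) := P₁.2.1 0 1 (by decide)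
  have hba₂ : (P₂.1 1 : ℕ) ≤ (P₂.1 0 : ℕ) := P₂.2.1 0 1 (by decide)
  rw [e1, e2] at harea
  rw [d1, d2] at hdinv
  obtain ⟨ha, hb⟩ := stat_inj n (P₁.1 0 : ℕ) (P₁.1 1 : ℕ) (P₂.1 0 : ℕ) (P₂.1 1 : ℕ)
    h3' hba₁ hba₂ h21₁ h20₁ h21₂ h20₂ harea hdinv
  apply Subtype.ext
  funext i
  fin_cases i
  · exact Fin.ext ha
  · exact Fin.ext hb
  · exact Fin.ext (c21.trans c22.symm)
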